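/- Let M, N ≥ 2 and let p ≥ 1 be an integer. Let α ∈ ℂ^M and β ∈ ℂ^N be unit vectors, and let α̃, β̃ be p-bit truncations of α, β. Then ‖(α αᴴ) ⊗ (β βᴴ) − (α̃ α̃ᴴ) ⊗ (β̃ β̃ᴴ)‖₂ ≤ M·N · 2^{−(p−6.5)}. -/

import Mathlib

open Matrix
open scoped Kronecker

noncomputable section

/-- `x` is a unit vector in `ℂ^d`. -/
def isUnitVec {d : ℕ} (x : Fin d → ℂ) : Prop := ∑ i, ‖x i‖ ^ 2 = 1

/-- The rank-one projector `x xᴴ`. -/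
def outer {d : ℕ} (x : Fin d → ℂ) : Matrix (Fin d) (Fin d) ℂ :=
  Matrix.vecMulVec x (star x)

/-- `x'` is a `p`-bit truncation of the real number `x`. -/
def IsTruncR (p : ℕ) (x x' : ℝ) : Prop := |x'| ≤ |x| ∧ |x - x'| < (2 : ℝ) ^ (-(p : ℤ))

/-- `z'` is a `p`-bit truncation of the complex number `z` (real and imaginary parts are
truncated separately). -/
def IsTruncC (p : ℕ) (z z' : ℂ) : Prop := IsTruncR p z.re z'.re ∧ IsTruncR p z.im z'.im

/-- `x'` is a coordinatewise `p`-bit truncation of the complex vector `x`. -/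
def IsTruncVec {d : ℕ} (p : ℕ) (x x' : Fin d → ℂ) : Prop := ∀ i, IsTruncC p (x i) (x' i)

/-- The Frobenius (Hilbert–Schmidt) norm `‖X‖₂ = √tr(XᴴX)`. -/
def frob {m : Type*} [Fintype m] (X : Matrix m m ℂ) : ℝ :=
  Real.sqrt (∑ i, ∑ j, ‖X i j‖ ^ 2)

lemma truncC_norm_le {p : ℕ} {z z' : ℂ} (h : IsTruncC p z z') : ‖z'‖ ≤ ‖z‖ := by
  obtain ⟨⟨h1, _⟩, ⟨h2, _⟩⟩ := h
  rw [Complex.norm_def, Complex.norm_def,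
    Complex.normSq_apply, Complex.normSq_apply]
  apply Real.sqrt_le_sqrt
  nlinarith [mul_self_le_mul_self (abs_nonneg z'.re) h1,
    mul_self_le_mul_self (abs_nonneg z'.im) h2,
    abs_mul_abs_self z'.re, abs_mul_abs_self z.re,
    abs_mul_abs_self z'.im, abs_mul_abs_self z.im]

lemma truncC_dist_le {p : ℕ} {z z' : ℂ} (h : IsTruncC p z z') :
    ‖z - z'‖ ≤ 2 * (2 : ℝ) ^ (-(p : ℤ)) := by
  obtain ⟨⟨_, h1⟩, ⟨_, h2⟩⟩ := h
  have key := Complex.norm_le_abs_re_add_abs_im (z - z')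
  simp only [Complex.sub_re, Complex.sub_im] at key
  linarith

lemma unit_coord_le {d : ℕ} {x : Fin d → ℂ} (hx : isUnitVec x) (i : Fin d) : ‖x i‖ ≤ 1 := by
  have h : ‖x i‖ ^ 2 ≤ 1 := by
    rw [← hx]
    exact Finset.single_le_sum (f := fun j => ‖x j‖ ^ 2) (fun j _ => by positivity)
      (Finset.mem_univ i)
  nlinarith [norm_nonneg (x i)]

lemma norm_prod4_le {w x y z : ℂ} {δ : ℝ} (hw : ‖w‖ ≤ δ) (hx : ‖x‖ ≤ 1) (hy : ‖y‖ ≤ 1)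
    (hz : ‖z‖ ≤ 1) : ‖w * x * y * z‖ ≤ δ := by
  have hδ0 : (0 : ℝ) ≤ δ := (norm_nonneg w).trans hw
  rw [norm_mul, norm_mul, norm_mul]
  have : ‖w‖ * ‖x‖ * ‖y‖ * ‖z‖ ≤ δ * 1 * 1 * 1 := by
    gcongr <;> first | exact hw | exact hx | exact hy | exact hz
  linarith

lemma entry_bound {a b c d a' b' c' d' : ℂ} {δ : ℝ}
    (ha : ‖a‖ ≤ 1) (hb : ‖b‖ ≤ 1) (hc : ‖c‖ ≤ 1) (hd : ‖d‖ ≤ 1)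
    (ha' : ‖a'‖ ≤ ‖a‖) (hb' : ‖b'‖ ≤ ‖b‖) (hc' : ‖c'‖ ≤ ‖c‖)
    (da : ‖a - a'‖ ≤ δ) (db : ‖b - b'‖ ≤ δ) (dc : ‖c - c'‖ ≤ δ) (dd : ‖d - d'‖ ≤ δ) :
    ‖a * b * (c * d) - a' * b' * (c' * d')‖ ≤ 4 * δ := by
  have key : a * b * (c * d) - a' * b' * (c' * d')
      = (a - a') * b * c * d + (b - b') * a' * c * d + (c - c') * a' * b' * d
        + (d - d') * a' * b' * c' := by ring
  rw [key]
  have t1 := norm_prod4_le da hb hc hd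
  have t2 := norm_prod4_le db (ha'.trans ha) hc hd
  have t3 := norm_prod4_le dc (ha'.trans ha) (hb'.trans hb) hd
  have t4 := norm_prod4_le dd (ha'.trans ha) (hb'.trans hb) (hc'.trans hc)
  refine le_trans (norm_add_le _ _) ?_
  refine le_trans (add_le_add_left (norm_add_le _ _) _) ?_
  refine le_trans (add_le_add_left (add_le_add_left (norm_add_le _ _) _) _) ?_
  linarith

/-- Truncating a pure product state to `p` bits moves it by at most `MN·2^{−(p−6.5)}` in
Frobenius norm. -/
theorem pure_product_truncation_bound (M N p : ℕ) (hM : 2 ≤ M) (hN : 2 ≤ N) (hp : 1 ≤ p)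
    (α α' : Fin M → ℂ) (β β' : Fin N → ℂ)
    (hα : isUnitVec α) (hβ : isUnitVec β)
    (htα : IsTruncVec p α α') (htβ : IsTruncVec p β β') :
    frob (outer α ⊗ₖ outer β - outer α' ⊗ₖ outer β')
      ≤ (M : ℝ) * (N : ℝ) * (2 : ℝ) ^ ((6.5 : ℝ) - (p : ℝ)) := by
  set ε : ℝ := (2 : ℝ) ^ (-(p : ℤ)) with hε
  have hε0 : (0 : ℝ) ≤ ε := by positivity
  set δ : ℝ := 2 * ε with hδ
  set X := outer α ⊗ₖ outer β - outer α' ⊗ₖ outer β' with hX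
  have hbound : ∀ i j : Fin M × Fin N, ‖X i j‖ ≤ 4 * δ := by
    intro i j
    have hx : X i j = α i.1 * star (α j.1) * (β i.2 * star (β j.2))
        - α' i.1 * star (α' j.1) * (β' i.2 * star (β' j.2)) := by
      simp [hX, outer, Matrix.kroneckerMap_apply, Matrix.vecMulVec_apply, Matrix.sub_apply]
    rw [hx]
    refine entry_bound (unit_coord_le hα i.1) ?_ (unit_coord_le hβ i.2) ?_
      (truncC_norm_le (htα i.1)) ?_ (truncC_norm_le (htβ i.2))
      (truncC_dist_le (htα i.1)) ?_ (truncC_dist_le (htβ i.2)) ?_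
    · rw [norm_star]; exact unit_coord_le hα j.1
    · rw [norm_star]; exact unit_coord_le hβ j.2
    · rw [norm_star, norm_star]; exact truncC_norm_le (htα j.1)
    · rw [← star_sub, norm_star]; exact truncC_dist_le (htα j.1)
    · rw [← star_sub, norm_star]; exact truncC_dist_le (htβ j.2)
  have hsum : ∑ i : Fin M × Fin N, ∑ j : Fin M × Fin N, ‖X i j‖ ^ 2
      ≤ ((M : ℝ) * (N : ℝ) * (4 * δ)) ^ 2 := by
    calc ∑ i : Fin M × Fin N, ∑ j : Fin M × Fin N, ‖X i j‖ ^ 2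
        ≤ ∑ _i : Fin M × Fin N, ∑ _j : Fin M × Fin N, (4 * δ) ^ 2 := by
          refine Finset.sum_le_sum fun i _ => Finset.sum_le_sum fun j _ => ?_
          exact pow_le_pow_left₀ (norm_nonneg _) (hbound i j) 2
      _ = ((M : ℝ) * (N : ℝ) * (4 * δ)) ^ 2 := by
          simp [Finset.sum_const, Finset.card_univ, nsmul_eq_mul]
          push_cast
          ring
  have h1 : frob X ≤ (M : ℝ) * (N : ℝ) * (4 * δ) := by
    rw [frob]
    calc Real.sqrt (∑ i, ∑ j, ‖X i j‖ ^ 2)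
        ≤ Real.sqrt (((M : ℝ) * (N : ℝ) * (4 * δ)) ^ 2) := Real.sqrt_le_sqrt hsum
      _ = (M : ℝ) * (N : ℝ) * (4 * δ) := Real.sqrt_sq (by positivity)
  refine h1.trans ?_
  have hMN : (0 : ℝ) ≤ (M : ℝ) * (N : ℝ) := by positivity
  refine mul_le_mul_of_nonneg_left ?_ hMN
  have h2 : (2 : ℝ) ^ ((6.5 : ℝ) - (p : ℝ)) = (2 : ℝ) ^ (6.5 : ℝ) * (2 : ℝ) ^ (-(p : ℝ)) := by
    rw [← Real.rpow_add (by norm_num)]; ring_nf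
  have h3 : (2 : ℝ) ^ (-(p : ℝ)) = ε := by
    rw [hε, ← Real.rpow_intCast]; push_cast; ring_nf
  have h4 : (8 : ℝ) ≤ (2 : ℝ) ^ (6.5 : ℝ) := by
    calc (8 : ℝ) = (2 : ℝ) ^ ((3 : ℕ) : ℝ) := by rw [Real.rpow_natCast]; norm_num
      _ ≤ _ := Real.rpow_le_rpow_of_exponent_le (by norm_num) (by norm_num)
  rw [h2, h3, hδ]
  nlinarith

end
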